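/- arXiv:2407.05972 — 5 statements merged into one kernel-verified Lean document; each statement's English description precedes it below -/
import Mathlib

section
/- Genuine nonlinearity: Define λ₁(σ,β) = 1/(β−σ) on {(σ,β) ∈ ℝ² : β ≠ σ} and λ₂(σ,β) = 1/(β+σ) on {(σ,β) ∈ ℝ² : β ≠ −σ}, and let r₁ = (1/√2)·(1,−1), r₂ = (1/√2)·(1,1) ∈ ℝ². Then for every (σ,β) with β ≠ σ, the derivative of λ₁ at (σ,β) in the direction r₁ (i.e. ∇λ₁(σ,β)·r₁) equals √2/(β−σ)², which is nonzero; and for every (σ,β) with β ≠ −σ, the derivative of λ₂ at (σ,β) in the direction r₂ equals −√2/(β+σ)², which is nonzero. -/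
noncomputable section

/-- The first characteristic speed `λ₁(σ,β) = 1/(β − σ)`. -/
def lambda1 (p : ℝ × ℝ) : ℝ := 1 / (p.2 - p.1)

/-- The second characteristic speed `λ₂(σ,β) = 1/(β + σ)`. -/
def lambda2 (p : ℝ × ℝ) : ℝ := 1 / (p.2 + p.1)

/-- The first unit right eigenvector `r₁ = (1/√2)·(1,−1)`. -/
def r1 : ℝ × ℝ := (Real.sqrt 2)⁻¹ • ((1 : ℝ), (-1 : ℝ))

/-- The second unit right eigenvector `r₂ = (1/√2)·(1,1)`. -/
def r2 : ℝ × ℝ := (Real.sqrt 2)⁻¹ • ((1 : ℝ), (1 : ℝ))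

lemma key1 (σ β : ℝ) (h : β ≠ σ) :
    HasFDerivAt lambda1
      ((-((β - σ)^2)⁻¹) • (ContinuousLinearMap.snd ℝ ℝ ℝ - ContinuousLinearMap.fst ℝ ℝ ℝ)) (σ, β) := by
  have hne : (β : ℝ) - σ ≠ 0 := sub_ne_zero.mpr h
  have h1 : HasFDerivAt (fun p : ℝ × ℝ => p.2 - p.1)
      (ContinuousLinearMap.snd ℝ ℝ ℝ - ContinuousLinearMap.fst ℝ ℝ ℝ) (σ, β) :=
    (hasFDerivAt_snd.sub hasFDerivAt_fst)
  have h2 := (hasFDerivAt_inv hne).comp (σ, β) h1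
  have : lambda1 = fun p : ℝ × ℝ => (p.2 - p.1)⁻¹ := by
    funext p; simp [lambda1, one_div]
  rw [this]
  refine h2.congr_fderiv ?_
  ext v <;> simp [ContinuousLinearMap.smul_apply]

lemma key2 (σ β : ℝ) (h : β ≠ -σ) :
    HasFDerivAt lambda2
      ((-((β + σ)^2)⁻¹) • (ContinuousLinearMap.snd ℝ ℝ ℝ + ContinuousLinearMap.fst ℝ ℝ ℝ)) (σ, β) := by
  have hne : (β : ℝ) + σ ≠ 0 := by
    intro hc; exact h (by linarith)
  have h1 : HasFDerivAt (fun p : ℝ × ℝ => p.2 + p.1)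
      (ContinuousLinearMap.snd ℝ ℝ ℝ + ContinuousLinearMap.fst ℝ ℝ ℝ) (σ, β) :=
    (hasFDerivAt_snd.add hasFDerivAt_fst)
  have h2 := (hasFDerivAt_inv hne).comp (σ, β) h1
  have : lambda2 = fun p : ℝ × ℝ => (p.2 + p.1)⁻¹ := by
    funext p; simp [lambda2, one_div]
  rw [this]
  refine h2.congr_fderiv ?_
  ext v <;> simp [ContinuousLinearMap.smul_apply]

/-- **Genuine nonlinearity** (Lemma 4.2): the directional derivatives `∇λⱼ · rⱼ` are
given by `√2/(β−σ)²` and `−√2/(β+σ)²` respectively, and never vanish. -/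
theorem genuine_nonlinearity :
    (∀ σ β : ℝ, β ≠ σ →
      fderiv ℝ lambda1 (σ, β) r1 = Real.sqrt 2 / (β - σ)^2 ∧
      Real.sqrt 2 / (β - σ)^2 ≠ 0) ∧
    (∀ σ β : ℝ, β ≠ -σ →
      fderiv ℝ lambda2 (σ, β) r2 = -(Real.sqrt 2 / (β + σ)^2) ∧
      -(Real.sqrt 2 / (β + σ)^2) ≠ 0) := by
  have hs : Real.sqrt 2 ≠ 0 := by positivity
  have hsq : Real.sqrt 2 ^ 2 = 2 := Real.sq_sqrt (by norm_num)
  constructor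
  · intro σ β h
    have hne : (β : ℝ) - σ ≠ 0 := sub_ne_zero.mpr h
    refine ⟨?_, by positivity⟩
    rw [(key1 σ β h).fderiv]
    simp [r1, ContinuousLinearMap.smul_apply]
    field_simp
    ring_nf
    rw [hsq]
  · intro σ β h
    have hne : (β : ℝ) + σ ≠ 0 := fun hc => h (by linarith)
    refine ⟨?_, neg_ne_zero.mpr (by positivity)⟩
    rw [(key2 σ β h).fderiv]
    simp [r2, ContinuousLinearMap.smul_apply]
    field_simp
    ring_nf
    rw [hsq]
end
end

section
/- Second family of entropy pairs: Let g : ℝ → ℝ be C¹ with g(0) = 0. On U = {(σ,β) ∈ ℝ² : σ > |β|} define η₂(σ,β) = ∫_{β−σ}^{β+σ} g(s) ds and q₂(σ,β) = ∫_{β−σ}^{β+σ} g(s)/s ds. Then η₂ and q₂ are C² on U, with ∂_σ q₂(σ,β) = g(β+σ)/(β+σ) + g(β−σ)/(β−σ) and ∂_β q₂(σ,β) = g(β+σ)/(β+σ) − g(β−σ)/(β−σ), and (η₂,q₂) is an entropy pair, i.e. on U: ∂_σ q₂ = (β ∂_σ η₂ − σ ∂_β η₂)/(β² − σ²) and ∂_β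 q₂ = (β ∂_β η₂ − σ ∂_σ η₂)/(β² − σ²). -/
open MeasureTheory Set Filter Topology

noncomputable section

/-- Phase-space region `U = {(σ,β) : σ > |β|}`. -/
def U : Set (ℝ × ℝ) := {p | |p.2| < p.1}

/-- `(η,q)` is an entropy pair for the γ = 3 isentropic Carrollian system:
both are C² on `U` and the gradient relations
`∂_σ q = (β ∂_σ η − σ ∂_β η)/(β² − σ²)`, `∂_β q = (β ∂_β η − σ ∂_σ η)/(β² − σ²)` hold on `U`. -/
structure IsEntropyPair (η q : ℝ → ℝ → ℝ) : Prop where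
  smooth_eta : ContDiffOn ℝ 2 (fun p : ℝ × ℝ => η p.1 p.2) U
  smooth_q : ContDiffOn ℝ 2 (fun p : ℝ × ℝ => q p.1 p.2) U
  grad_sigma : ∀ s b : ℝ, (s, b) ∈ U →
    deriv (fun s' => q s' b) s
      = (b * deriv (fun s' => η s' b) s - s * deriv (fun b' => η s b') b) / (b^2 - s^2)
  grad_beta : ∀ s b : ℝ, (s, b) ∈ U →
    deriv (fun b' => q s b') b
      = (b * deriv (fun b' => η s b') b - s * deriv (fun s' => η s' b) s) / (b^2 - s^2)

/-- The second entropy `η₂(σ,β) = ∫_{β−σ}^{β+σ} g(u) du`. -/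
def eta2 (g : ℝ → ℝ) (s b : ℝ) : ℝ := ∫ u in (b - s)..(b + s), g u

/-- The second entropy flux `q₂(σ,β) = ∫_{β−σ}^{β+σ} g(u)/u du`. -/
def q2flux (g : ℝ → ℝ) (s b : ℝ) : ℝ := ∫ u in (b - s)..(b + s), g u / u

namespace SE

variable (g : ℝ → ℝ)

/-- patched quotient -/
def h : ℝ → ℝ := fun u => if u = 0 then deriv g 0 else g u / u

lemma h_ne (u : ℝ) (hu : u ≠ 0) : h g u = g u / u := if_neg hu

lemma h_cont (hg : ContDiff ℝ 1 g) (hg0 : g 0 = 0) : Continuous (h g) := by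
  rw [continuous_iff_continuousAt]
  intro x
  rcases eq_or_ne x 0 with rfl | hx
  · have hd : HasDerivAt g (deriv g 0) 0 :=
      ((hg.differentiable one_ne_zero) 0).hasDerivAt
    have hslope := hasDerivAt_iff_tendsto_slope.mp hd
    have h1 : Tendsto (h g) (𝓝[≠] (0:ℝ)) (𝓝 (deriv g 0)) := by
      refine hslope.congr' ?_
      filter_upwards [self_mem_nhdsWithin] with u hu
      have hu' : u ≠ 0 := hu
      simp [slope, h, hu', hg0, div_eq_inv_mul]
    have : Tendsto (h g) (𝓝 (0:ℝ)) (𝓝 (h g 0)) := by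
      rw [← nhdsNE_sup_pure 0, Filter.tendsto_sup]
      exact ⟨by simpa [h] using h1, tendsto_pure_nhds (h g) 0⟩
    exact this
  · have : ContinuousAt (fun u => g u / u) x :=
      (hg.continuous.continuousAt).div continuousAt_id hx
    refine this.congr ?_
    filter_upwards [isOpen_ne.mem_nhds hx] with u hu
    simp [h, hu]

def G : ℝ → ℝ := fun x => ∫ u in (0:ℝ)..x, g u

def H : ℝ → ℝ := fun x => ∫ u in (0:ℝ)..x, h g u

lemma hasDerivAt_G (hg : ContDiff ℝ 1 g) (x : ℝ) : HasDerivAt (G g) (g x) x :=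
  intervalIntegral.integral_hasDerivAt_right (hg.continuous.intervalIntegrable _ _)
    (hg.continuous.stronglyMeasurableAtFilter _ _) hg.continuous.continuousAt

lemma hasDerivAt_H (hg : ContDiff ℝ 1 g) (hg0 : g 0 = 0) (x : ℝ) :
    HasDerivAt (H g) (h g x) x :=
  intervalIntegral.integral_hasDerivAt_right ((h_cont g hg hg0).intervalIntegrable _ _)
    ((h_cont g hg hg0).stronglyMeasurableAtFilter _ _) (h_cont g hg hg0).continuousAt

lemma G_contDiff (hg : ContDiff ℝ 1 g) : ContDiff ℝ 2 (G g) := by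
  rw [show (2 : WithTop ℕ∞) = 1 + 1 from rfl, contDiff_succ_iff_deriv]
  refine ⟨fun x => (hasDerivAt_G g hg x).differentiableAt, by simp, ?_⟩
  have : deriv (G g) = g := funext fun x => (hasDerivAt_G g hg x).deriv
  rw [this]; exact hg

lemma H_contDiffOn (hg : ContDiff ℝ 1 g) (hg0 : g 0 = 0) {s : Set ℝ} (hs : IsOpen s)
    (h0 : (0:ℝ) ∉ s) : ContDiffOn ℝ 2 (H g) s := by
  rw [show (2 : WithTop ℕ∞) = 1 + 1 from rfl, contDiffOn_succ_iff_deriv_of_isOpen hs]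
  refine ⟨fun x hx => (hasDerivAt_H g hg hg0 x).differentiableAt.differentiableWithinAt,
    by simp, ?_⟩
  have hd : ∀ x ∈ s, deriv (H g) x = g x / x := by
    intro x hx
    rw [(hasDerivAt_H g hg hg0 x).deriv, h_ne]
    exact fun hx0 => h0 (hx0 ▸ hx)
  refine ContDiffOn.congr ?_ hd
  exact (hg.contDiffOn).div contDiffOn_id fun x hx hx0 => h0 (hx0 ▸ hx)

lemma eta2_eq (hg : ContDiff ℝ 1 g) (s b : ℝ) :
    (∫ u in (b - s)..(b + s), g u) = G g (b + s) - G g (b - s) := by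
  have hint : ∀ x y : ℝ, IntervalIntegrable g volume x y :=
    fun x y => hg.continuous.intervalIntegrable x y
  rw [G, G, ← intervalIntegral.integral_add_adjacent_intervals (hint 0 (b-s)) (hint (b-s) (b+s))]
  ring

lemma q2_eq (hg : ContDiff ℝ 1 g) (hg0 : g 0 = 0) (s b : ℝ) :
    (∫ u in (b - s)..(b + s), g u / u) = H g (b + s) - H g (b - s) := by
  have hc := h_cont g hg hg0
  have heq : ∀ x y : ℝ, (∫ u in x..y, g u / u) = ∫ u in x..y, h g u := by
    intro x y
    refine intervalIntegral.integral_congr_ae ?_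
    filter_upwards [compl_mem_ae_iff.mpr (measure_singleton (0:ℝ))] with u hu _
    exact (h_ne g u hu).symm
  have hint : ∀ x y : ℝ, IntervalIntegrable (h g) volume x y :=
    fun x y => hc.intervalIntegrable x y
  rw [heq, H, H,
    ← intervalIntegral.integral_add_adjacent_intervals (hint 0 (b-s)) (hint (b-s) (b+s))]
  ring

end SE

/-- **Second family of entropy pairs** (Lemma 5.2, second part): for `g ∈ C¹(ℝ)` with
`g(0) = 0`, the pair `(η₂,q₂)` is C² on `U`, the partial derivatives of `q₂` are
`∂_σ q₂ = g(β+σ)/(β+σ) + g(β−σ)/(β−σ)` and `∂_β q₂ = g(β+σ)/(β+σ) − g(β−σ)/(β−σ)`,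
and `(η₂,q₂)` is an entropy pair. -/
theorem second_entropy_family (g : ℝ → ℝ) (hg : ContDiff ℝ 1 g) (hg0 : g 0 = 0) :
    ContDiffOn ℝ 2 (fun p : ℝ × ℝ => eta2 g p.1 p.2) U ∧
    ContDiffOn ℝ 2 (fun p : ℝ × ℝ => q2flux g p.1 p.2) U ∧
    (∀ s b : ℝ, (s, b) ∈ U →
      deriv (fun s' => q2flux g s' b) s = g (b + s) / (b + s) + g (b - s) / (b - s) ∧
      deriv (fun b' => q2flux g s b') b = g (b + s) / (b + s) - g (b - s) / (b - s)) ∧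
    IsEntropyPair (eta2 g) (q2flux g) := by
  have hGc := SE.G_contDiff g hg
  have heta_eq : (fun p : ℝ × ℝ => eta2 g p.1 p.2)
      = fun p : ℝ × ℝ => SE.G g (p.2 + p.1) - SE.G g (p.2 - p.1) :=
    funext fun p => SE.eta2_eq g hg p.1 p.2
  have hq_eq : (fun p : ℝ × ℝ => q2flux g p.1 p.2)
      = fun p : ℝ × ℝ => SE.H g (p.2 + p.1) - SE.H g (p.2 - p.1) :=
    funext fun p => SE.q2_eq g hg hg0 p.1 p.2
  have hadd : ContDiff ℝ 2 (fun p : ℝ × ℝ => p.2 + p.1) := contDiff_snd.add contDiff_fst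
  have hsub : ContDiff ℝ 2 (fun p : ℝ × ℝ => p.2 - p.1) := contDiff_snd.sub contDiff_fst
  have hsmooth_eta : ContDiffOn ℝ 2 (fun p : ℝ × ℝ => eta2 g p.1 p.2) U := by
    rw [heta_eq]
    exact ((hGc.comp hadd).sub (hGc.comp hsub)).contDiffOn
  have hmem : ∀ p : ℝ × ℝ, p ∈ U → 0 < p.2 + p.1 ∧ p.2 - p.1 < 0 := by
    intro p hp
    have hp' : |p.2| < p.1 := hp
    have := abs_lt.mp hp'
    constructor <;> linarith [this.1, this.2]
  have hsmooth_q : ContDiffOn ℝ 2 (fun p : ℝ × ℝ => q2flux g p.1 p.2) U := by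
    rw [hq_eq]
    have h1 : ContDiffOn ℝ 2 (SE.H g) (Ioi 0) := SE.H_contDiffOn g hg hg0 isOpen_Ioi (by simp)
    have h2 : ContDiffOn ℝ 2 (SE.H g) (Iio 0) := SE.H_contDiffOn g hg hg0 isOpen_Iio (by simp)
    exact (h1.comp hadd.contDiffOn fun p hp => (hmem p hp).1).sub
      (h2.comp hsub.contDiffOn fun p hp => (hmem p hp).2)
  have hderivs : ∀ s b : ℝ, (s, b) ∈ U →
      deriv (fun s' => eta2 g s' b) s = g (b + s) + g (b - s) ∧
      deriv (fun b' => eta2 g s b') b = g (b + s) - g (b - s) ∧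
      deriv (fun s' => q2flux g s' b) s = g (b + s) / (b + s) + g (b - s) / (b - s) ∧
      deriv (fun b' => q2flux g s b') b = g (b + s) / (b + s) - g (b - s) / (b - s) := by
    intro s b hsb
    obtain ⟨hP, hM⟩ := hmem (s, b) hsb
    simp only at hP hM
    have hP0 : b + s ≠ 0 := ne_of_gt hP
    have hM0 : b - s ≠ 0 := ne_of_lt hM
    have e1 : (fun s' => eta2 g s' b) = fun s' => SE.G g (b + s') - SE.G g (b - s') :=
      funext fun s' => SE.eta2_eq g hg s' b
    have e2 : (fun b' => eta2 g s b') = fun b' => SE.G g (b' + s) - SE.G g (b' - s) :=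
      funext fun b' => SE.eta2_eq g hg s b'
    have e3 : (fun s' => q2flux g s' b) = fun s' => SE.H g (b + s') - SE.H g (b - s') :=
      funext fun s' => SE.q2_eq g hg hg0 s' b
    have e4 : (fun b' => q2flux g s b') = fun b' => SE.H g (b' + s) - SE.H g (b' - s) :=
      funext fun b' => SE.q2_eq g hg hg0 s b'
    have dG1 : HasDerivAt (fun s' : ℝ => SE.G g (b + s')) (g (b + s)) s := by
      simpa [Function.comp_def] using (SE.hasDerivAt_G g hg (b + s)).comp s ((hasDerivAt_id s).const_add b)
    have dG2 : HasDerivAt (fun s' : ℝ => SE.G g (b - s')) (-(g (b - s))) s := by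
      simpa [Function.comp_def] using (SE.hasDerivAt_G g hg (b - s)).comp s ((hasDerivAt_id s).const_sub b)
    have dG3 : HasDerivAt (fun b' : ℝ => SE.G g (b' + s)) (g (b + s)) b := by
      simpa [add_comm, Function.comp_def] using (SE.hasDerivAt_G g hg (b + s)).comp b ((hasDerivAt_id b).add_const s)
    have dG4 : HasDerivAt (fun b' : ℝ => SE.G g (b' - s)) (g (b - s)) b := by
      simpa [Function.comp_def] using (SE.hasDerivAt_G g hg (b - s)).comp b ((hasDerivAt_id b).sub_const s)
    have dH1 : HasDerivAt (fun s' : ℝ => SE.H g (b + s')) (SE.h g (b + s)) s := by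
      simpa [Function.comp_def] using (SE.hasDerivAt_H g hg hg0 (b + s)).comp s ((hasDerivAt_id s).const_add b)
    have dH2 : HasDerivAt (fun s' : ℝ => SE.H g (b - s')) (-(SE.h g (b - s))) s := by
      simpa [Function.comp_def] using (SE.hasDerivAt_H g hg hg0 (b - s)).comp s ((hasDerivAt_id s).const_sub b)
    have dH3 : HasDerivAt (fun b' : ℝ => SE.H g (b' + s)) (SE.h g (b + s)) b := by
      simpa [add_comm, Function.comp_def] using
        (SE.hasDerivAt_H g hg hg0 (b + s)).comp b ((hasDerivAt_id b).add_const s)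
    have dH4 : HasDerivAt (fun b' : ℝ => SE.H g (b' - s)) (SE.h g (b - s)) b := by
      simpa [Function.comp_def] using (SE.hasDerivAt_H g hg hg0 (b - s)).comp b ((hasDerivAt_id b).sub_const s)
    refine ⟨?_, ?_, ?_, ?_⟩
    · rw [e1, (dG1.fun_sub dG2).deriv]; ring
    · rw [e2, (dG3.fun_sub dG4).deriv]
    · rw [e3, (dH1.fun_sub dH2).deriv, SE.h_ne g _ hP0, SE.h_ne g _ hM0]; ring
    · rw [e4, (dH3.fun_sub dH4).deriv, SE.h_ne g _ hP0, SE.h_ne g _ hM0]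
  refine ⟨hsmooth_eta, hsmooth_q,
    fun s b hsb => ⟨(hderivs s b hsb).2.2.1, (hderivs s b hsb).2.2.2⟩,
    hsmooth_eta, hsmooth_q, ?_, ?_⟩
  · intro s b hsb
    obtain ⟨d1, d2, d3, d4⟩ := hderivs s b hsb
    obtain ⟨hP, hM⟩ := hmem (s, b) hsb
    simp only at hP hM
    have hP0 : b + s ≠ 0 := ne_of_gt hP
    have hM0 : b - s ≠ 0 := ne_of_lt hM
    rw [d3, d1, d2, show b ^ 2 - s ^ 2 = (b + s) * (b - s) by ring]
    field_simp
    ring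
  · intro s b hsb
    obtain ⟨d1, d2, d3, d4⟩ := hderivs s b hsb
    obtain ⟨hP, hM⟩ := hmem (s, b) hsb
    simp only at hP hM
    have hP0 : b + s ≠ 0 := ne_of_gt hP
    have hM0 : b - s ≠ 0 := ne_of_lt hM
    rw [d4, d1, d2, show b ^ 2 - s ^ 2 = (b + s) * (b - s) by ring]
    field_simp
    ring
end
end

section
/- The system is in conservative form only for γ = 3: Let γ > 0 be a real number. The following are equivalent: (i) γ = 3; (ii) for every (σ,β) ∈ ℝ² with σ > 0 and β² ≠ σ^{γ−1} (powers of σ taken as real powers), both symmetry conditions for the closedness of the rows of the matrix field (β² − σ^{γ−1})⁻¹·[[β, −σ], [−σ^{γ−2}, β]] hold, namely ∂_β [ β/(β² − σ^{γ−1}) ] = ∂_σ [ −σ/(β² − σ^{γ−1}) ] and ∂_β [ −σ^{γ−2}/(β² − σ^{γ−1}) ] = ∂_σ [ β/(β² − σ^{γ−1}) ]. -/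
noncomputable section

open Real

lemma derivB1 (A β : ℝ) (h : β^2 ≠ A) :
    HasDerivAt (fun b : ℝ => b / (b^2 - A)) ((-(β^2) - A) / (β^2 - A)^2) β := by
  have hg : HasDerivAt (fun b : ℝ => b^2 - A) (2*β) β := by
    simpa using ((hasDerivAt_pow 2 β).sub_const A)
  have := (hasDerivAt_id β).div hg (sub_ne_zero.mpr h)
  refine HasDerivAt.congr_deriv this ?_
  simp only [id_eq]
  ring

lemma derivB2 (A C β : ℝ) (h : β^2 ≠ A) :
    HasDerivAt (fun b : ℝ => -C / (b^2 - A)) ((2*β*C) / (β^2 - A)^2) β := by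
  have hg : HasDerivAt (fun b : ℝ => b^2 - A) (2*β) β := by
    simpa using ((hasDerivAt_pow 2 β).sub_const A)
  have := (hasDerivAt_const β (-C)).div hg (sub_ne_zero.mpr h)
  refine HasDerivAt.congr_deriv this ?_
  ring

lemma derivS1 (γ β σ : ℝ) (hσ : 0 < σ) (h : β^2 ≠ σ ^ (γ-1)) :
    HasDerivAt (fun s : ℝ => -s / (β^2 - s ^ (γ-1)))
      ((-(β^2 - σ ^ (γ-1)) - (γ-1) * σ ^ (γ-1)) / (β^2 - σ ^ (γ-1))^2) σ := by
  have hp : HasDerivAt (fun s : ℝ => s ^ (γ-1)) ((γ-1) * σ ^ (γ-1-1)) σ :=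
    Real.hasDerivAt_rpow_const (Or.inl hσ.ne')
  have hg : HasDerivAt (fun s : ℝ => β^2 - s ^ (γ-1)) (-((γ-1) * σ ^ (γ-1-1))) σ := by
    simpa using (hp.const_sub (β^2))
  have hf : HasDerivAt (fun s : ℝ => -s) (-1 : ℝ) σ := (hasDerivAt_id σ).neg
  have := hf.div hg (sub_ne_zero.mpr h)
  refine HasDerivAt.congr_deriv this ?_
  have key : σ * σ ^ (γ-1-1) = σ ^ (γ-1) := by
    have h2 := (Real.rpow_add hσ 1 (γ-1-1)).symm
    rw [Real.rpow_one] at h2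
    rw [h2]
    congr 1
    ring
  congr 1
  rw [← key]
  ring

lemma derivS2 (γ β σ : ℝ) (hσ : 0 < σ) (h : β^2 ≠ σ ^ (γ-1)) :
    HasDerivAt (fun s : ℝ => β / (β^2 - s ^ (γ-1)))
      ((β * ((γ-1) * σ ^ (γ-2))) / (β^2 - σ ^ (γ-1))^2) σ := by
  have hp : HasDerivAt (fun s : ℝ => s ^ (γ-1)) ((γ-1) * σ ^ (γ-1-1)) σ :=
    Real.hasDerivAt_rpow_const (Or.inl hσ.ne')
  have hg : HasDerivAt (fun s : ℝ => β^2 - s ^ (γ-1)) (-((γ-1) * σ ^ (γ-1-1))) σ := by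
    simpa using (hp.const_sub (β^2))
  have := (hasDerivAt_const σ β).div hg (sub_ne_zero.mpr h)
  refine HasDerivAt.congr_deriv this ?_
  have : γ - 1 - 1 = γ - 2 := by ring
  rw [this]
  ring

/-- **The system is in conservative form only for γ = 3** (§2.2): for `γ > 0`, the matrix
field `(β² − σ^{γ−1})⁻¹·[[β, −σ], [−σ^{γ−2}, β]]` has closed rows (equality of the mixed
partial derivatives of the would-be flux) at every admissible point if and only if `γ = 3`.
Powers of `σ` are real powers, well defined since `σ > 0`. -/
theorem conservative_iff_gamma_eq_three (γ : ℝ) (hγ : 0 < γ) :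
    γ = 3 ↔
      ∀ σ β : ℝ, 0 < σ → β^2 ≠ σ ^ (γ - 1) →
        (deriv (fun b : ℝ => b / (b^2 - σ ^ (γ - 1))) β
            = deriv (fun s : ℝ => -s / (β^2 - s ^ (γ - 1))) σ) ∧
        (deriv (fun b : ℝ => -(σ ^ (γ - 2)) / (b^2 - σ ^ (γ - 1))) β
            = deriv (fun s : ℝ => β / (β^2 - s ^ (γ - 1))) σ) := by
  constructor
  · rintro rfl σ β hσ h
    rw [(derivB1 _ β h).deriv, (derivS1 3 β σ hσ h).deriv,
        (derivB2 _ (σ ^ ((3:ℝ)-2)) β h).deriv, (derivS2 3 β σ hσ h).deriv]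
    constructor
    · congr 1; ring
    · congr 1; ring
  · intro h
    obtain ⟨h1, _⟩ := h 1 0 one_pos (by simp)
    rw [(derivB1 _ 0 (by simp)).deriv, (derivS1 γ 0 1 one_pos (by simp)).deriv] at h1
    simp at h1
    linarith
end
end

section
/- The entropy equation: Let V ⊆ ℝ² be an open set such that every (σ,β) ∈ V satisfies σ ≠ 0, β ≠ σ and β ≠ −σ. Let η, q : V → ℝ be C² functions satisfying, at every point of V, ∂_σ q = (β ∂_σ η − σ ∂_β η)/(β² − σ²) and ∂_β q = (β ∂_β η − σ ∂_σ η)/(β² − σ²). Then ∂²η/∂σ² = ∂²η/∂β² at every point of V, i.e. η solves the linear wave equation η_{σσ} − η_{ββ} = 0 on V. -/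
noncomputable section

open Filter ContinuousLinearMap

/-- Slice derivative in the first coordinate. -/
private lemma hasDerivAt_slice1 {f : ℝ × ℝ → ℝ} {L : ℝ × ℝ →L[ℝ] ℝ} {s b : ℝ}
    (h : HasFDerivAt f L (s, b)) : HasDerivAt (fun s' => f (s', b)) (L (1, 0)) s :=
  h.comp_hasDerivAt s ((hasDerivAt_id s).prodMk (hasDerivAt_const s b))

/-- Slice derivative in the second coordinate. -/
private lemma hasDerivAt_slice2 {f : ℝ × ℝ → ℝ} {L : ℝ × ℝ →L[ℝ] ℝ} {s b : ℝ}
    (h : HasFDerivAt f L (s, b)) : HasDerivAt (fun b' => f (s, b')) (L (0, 1)) b :=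
  h.comp_hasDerivAt b ((hasDerivAt_const b s).prodMk (hasDerivAt_id b))

/-- **The entropy equation** (eq. (5.2)): if `(η,q)` are C² on an open set `V` avoiding
`σ = 0` and `β = ±σ`, and satisfy the entropy-pair gradient relations on `V`, then `η`
solves the linear wave equation `η_σσ − η_ββ = 0` on `V`. -/
theorem entropy_wave_equation
    (V : Set (ℝ × ℝ)) (hV : IsOpen V)
    (hVgood : ∀ p ∈ V, p.1 ≠ 0 ∧ p.2 ≠ p.1 ∧ p.2 ≠ -p.1)
    (η q : ℝ → ℝ → ℝ)
    (hη : ContDiffOn ℝ 2 (fun p : ℝ × ℝ => η p.1 p.2) V)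
    (hq : ContDiffOn ℝ 2 (fun p : ℝ × ℝ => q p.1 p.2) V)
    (hgrad1 : ∀ s b : ℝ, (s, b) ∈ V →
      deriv (fun s' => q s' b) s
        = (b * deriv (fun s' => η s' b) s - s * deriv (fun b' => η s b') b) / (b^2 - s^2))
    (hgrad2 : ∀ s b : ℝ, (s, b) ∈ V →
      deriv (fun b' => q s b') b
        = (b * deriv (fun b' => η s b') b - s * deriv (fun s' => η s' b) s) / (b^2 - s^2)) :
    ∀ s b : ℝ, (s, b) ∈ V →
      deriv (fun s' => deriv (fun s'' => η s'' b) s') s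
        = deriv (fun b' => deriv (fun b'' => η s b'') b') b := by
  set E : ℝ × ℝ → ℝ := fun p => η p.1 p.2 with hE
  set F : ℝ × ℝ → ℝ := fun p => q p.1 p.2 with hF
  set Eσ : ℝ × ℝ → ℝ := fun x => fderiv ℝ E x (1, 0) with hEσdef
  set Eβ : ℝ × ℝ → ℝ := fun x => fderiv ℝ E x (0, 1) with hEβdef
  set Fσ : ℝ × ℝ → ℝ := fun x => fderiv ℝ F x (1, 0) with hFσdef
  set Fβ : ℝ × ℝ → ℝ := fun x => fderiv ℝ F x (0, 1) with hFβdef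
  -- basic differentiability facts
  have hEc : ∀ x ∈ V, ContDiffAt ℝ 2 E x := fun x hx => hη.contDiffAt (hV.mem_nhds hx)
  have hFc : ∀ x ∈ V, ContDiffAt ℝ 2 F x := fun x hx => hq.contDiffAt (hV.mem_nhds hx)
  have hEd : ∀ x ∈ V, DifferentiableAt ℝ E x := fun x hx =>
    (hEc x hx).differentiableAt two_ne_zero
  have hFd : ∀ x ∈ V, DifferentiableAt ℝ F x := fun x hx =>
    (hFc x hx).differentiableAt two_ne_zero
  -- the slice derivatives of η and q equal the directional fderivs, on V
  have keyEσ : ∀ a c : ℝ, (a, c) ∈ V → deriv (fun s' => η s' c) a = Eσ (a, c) := by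
    intro a c hx
    exact (hasDerivAt_slice1 (hEd _ hx).hasFDerivAt).deriv
  have keyEβ : ∀ a c : ℝ, (a, c) ∈ V → deriv (fun b' => η a b') c = Eβ (a, c) := by
    intro a c hx
    exact (hasDerivAt_slice2 (hEd _ hx).hasFDerivAt).deriv
  have keyFσ : ∀ a c : ℝ, (a, c) ∈ V → deriv (fun s' => q s' c) a = Fσ (a, c) := by
    intro a c hx
    exact (hasDerivAt_slice1 (hFd _ hx).hasFDerivAt).deriv
  have keyFβ : ∀ a c : ℝ, (a, c) ∈ V → deriv (fun b' => q a b') c = Fβ (a, c) := by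
    intro a c hx
    exact (hasDerivAt_slice2 (hFd _ hx).hasFDerivAt).deriv
  -- the gradient relations in terms of the directional fderivs
  have hq1 : ∀ a c : ℝ, (a, c) ∈ V →
      Fσ (a, c) = (c * Eσ (a, c) - a * Eβ (a, c)) / (c ^ 2 - a ^ 2) := by
    intro a c hx
    rw [← keyFσ a c hx, ← keyEσ a c hx, ← keyEβ a c hx]
    exact hgrad1 a c hx
  have hq2 : ∀ a c : ℝ, (a, c) ∈ V →
      Fβ (a, c) = (c * Eβ (a, c) - a * Eσ (a, c)) / (c ^ 2 - a ^ 2) := by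
    intro a c hx
    rw [← keyFβ a c hx, ← keyEβ a c hx, ← keyEσ a c hx]
    exact hgrad2 a c hx
  -- now fix the point
  intro s b hsb
  obtain ⟨hs0, hb1, hb2⟩ := hVgood (s, b) hsb
  simp only at hs0 hb1 hb2
  have hD : b ^ 2 - s ^ 2 ≠ 0 := by
    have h1 : b - s ≠ 0 := sub_ne_zero.2 hb1
    have h2 : b + s ≠ 0 := by
      intro h; exact hb2 (by linarith)
    have : (b - s) * (b + s) ≠ 0 := mul_ne_zero h1 h2
    intro h; apply this; ring_nf; ring_nf at h; linarith
  -- second derivatives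
  set A : ℝ × ℝ →L[ℝ] ℝ × ℝ →L[ℝ] ℝ := fderiv ℝ (fderiv ℝ E) (s, b) with hA
  set B : ℝ × ℝ →L[ℝ] ℝ × ℝ →L[ℝ] ℝ := fderiv ℝ (fderiv ℝ F) (s, b) with hB
  have hAsym : ∀ v w, A v w = A w v := (hEc _ hsb).isSymmSndFDerivAt (by norm_num)
  have hBsym : ∀ v w, B v w = B w v := (hFc _ hsb).isSymmSndFDerivAt (by norm_num)
  have hE1 : DifferentiableAt ℝ (fderiv ℝ E) (s, b) :=
    ((hEc _ hsb).fderiv_right (m := 1) (by norm_num)).differentiableAt one_ne_zero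
  have hF1 : DifferentiableAt ℝ (fderiv ℝ F) (s, b) :=
    ((hFc _ hsb).fderiv_right (m := 1) (by norm_num)).differentiableAt one_ne_zero
  -- HasFDerivAt for the directional derivative functions
  have hEσF : HasFDerivAt Eσ ((apply ℝ ℝ ((1:ℝ), (0:ℝ))).comp A) (s, b) :=
    ((apply ℝ ℝ ((1:ℝ), (0:ℝ))).hasFDerivAt).comp (s, b) hE1.hasFDerivAt
  have hEβF : HasFDerivAt Eβ ((apply ℝ ℝ ((0:ℝ), (1:ℝ))).comp A) (s, b) :=
    ((apply ℝ ℝ ((0:ℝ), (1:ℝ))).hasFDerivAt).comp (s, b) hE1.hasFDerivAt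
  have hFσF : HasFDerivAt Fσ ((apply ℝ ℝ ((1:ℝ), (0:ℝ))).comp B) (s, b) :=
    ((apply ℝ ℝ ((1:ℝ), (0:ℝ))).hasFDerivAt).comp (s, b) hF1.hasFDerivAt
  have hFβF : HasFDerivAt Fβ ((apply ℝ ℝ ((0:ℝ), (1:ℝ))).comp B) (s, b) :=
    ((apply ℝ ℝ ((0:ℝ), (1:ℝ))).hasFDerivAt).comp (s, b) hF1.hasFDerivAt
  -- slice HasDerivAt facts
  have hEσ_s : HasDerivAt (fun s' => Eσ (s', b)) (A (1,0) (1,0)) s := by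
    simpa using hasDerivAt_slice1 hEσF
  have hEβ_s : HasDerivAt (fun s' => Eβ (s', b)) (A (1,0) (0,1)) s := by
    simpa using hasDerivAt_slice1 hEβF
  have hEσ_b : HasDerivAt (fun b' => Eσ (s, b')) (A (0,1) (1,0)) b := by
    simpa using hasDerivAt_slice2 hEσF
  have hEβ_b : HasDerivAt (fun b' => Eβ (s, b')) (A (0,1) (0,1)) b := by
    simpa using hasDerivAt_slice2 hEβF
  have hFσ_b : HasDerivAt (fun b' => Fσ (s, b')) (B (0,1) (1,0)) b := by
    simpa using hasDerivAt_slice2 hFσF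
  have hFβ_s : HasDerivAt (fun s' => Fβ (s', b)) (B (1,0) (0,1)) s := by
    simpa using hasDerivAt_slice1 hFβF
  -- open slices
  have hUs : IsOpen {s' : ℝ | (s', b) ∈ V} :=
    hV.preimage (continuous_id.prodMk continuous_const)
  have hUb : IsOpen {b' : ℝ | (s, b') ∈ V} :=
    hV.preimage (continuous_const.prodMk continuous_id)
  -- explicit derivative of the RHS of hq1 along the b-slice
  have hnum1 : HasDerivAt (fun b' => b' * Eσ (s, b') - s * Eβ (s, b'))
      (1 * Eσ (s, b) + b * (A (0,1) (1,0)) - s * (A (0,1) (0,1))) b :=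
    ((hasDerivAt_id b).mul hEσ_b).sub (hEβ_b.const_mul s)
  have hden1 : HasDerivAt (fun b' : ℝ => b' ^ 2 - s ^ 2) (2 * b) b := by
    simpa using ((hasDerivAt_pow 2 b).sub_const (s ^ 2))
  have hg1 : HasDerivAt (fun b' => (b' * Eσ (s, b') - s * Eβ (s, b')) / (b' ^ 2 - s ^ 2))
      (((1 * Eσ (s, b) + b * (A (0,1) (1,0)) - s * (A (0,1) (0,1))) * (b ^ 2 - s ^ 2)
        - (b * Eσ (s, b) - s * Eβ (s, b)) * (2 * b)) / (b ^ 2 - s ^ 2) ^ 2) b :=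
    hnum1.div hden1 hD
  -- explicit derivative of the RHS of hq2 along the s-slice
  have hnum2 : HasDerivAt (fun s' => b * Eβ (s', b) - s' * Eσ (s', b))
      (b * (A (1,0) (0,1)) - (1 * Eσ (s, b) + s * (A (1,0) (1,0)))) s :=
    (hEβ_s.const_mul b).sub ((hasDerivAt_id s).mul hEσ_s)
  have hden2 : HasDerivAt (fun s' : ℝ => b ^ 2 - s' ^ 2) (-(2 * s)) s := by
    simpa using ((hasDerivAt_pow 2 s).const_sub (b ^ 2))
  have hg2 : HasDerivAt (fun s' => (b * Eβ (s', b) - s' * Eσ (s', b)) / (b ^ 2 - s' ^ 2))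
      (((b * (A (1,0) (0,1)) - (1 * Eσ (s, b) + s * (A (1,0) (1,0)))) * (b ^ 2 - s ^ 2)
        - (b * Eβ (s, b) - s * Eσ (s, b)) * (-(2 * s))) / (b ^ 2 - s ^ 2) ^ 2) s :=
    hnum2.div hden2 hD
  -- transfer via eventual equality and uniqueness of derivatives
  have hev1 : (fun b' => Fσ (s, b')) =ᶠ[nhds b]
      (fun b' => (b' * Eσ (s, b') - s * Eβ (s, b')) / (b' ^ 2 - s ^ 2)) := by
    filter_upwards [hUb.mem_nhds hsb] with b' hb'
    exact hq1 s b' hb'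
  have hev2 : (fun s' => Fβ (s', b)) =ᶠ[nhds s]
      (fun s' => (b * Eβ (s', b) - s' * Eσ (s', b)) / (b ^ 2 - s' ^ 2)) := by
    filter_upwards [hUs.mem_nhds hsb] with s' hs'
    exact hq2 s' b hs'
  have huniq1 : B (0,1) (1,0)
      = ((1 * Eσ (s, b) + b * (A (0,1) (1,0)) - s * (A (0,1) (0,1))) * (b ^ 2 - s ^ 2)
        - (b * Eσ (s, b) - s * Eβ (s, b)) * (2 * b)) / (b ^ 2 - s ^ 2) ^ 2 :=
    hFσ_b.unique (hg1.congr_of_eventuallyEq hev1)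
  have huniq2 : B (1,0) (0,1)
      = ((b * (A (1,0) (0,1)) - (1 * Eσ (s, b) + s * (A (1,0) (1,0)))) * (b ^ 2 - s ^ 2)
        - (b * Eβ (s, b) - s * Eσ (s, b)) * (-(2 * s))) / (b ^ 2 - s ^ 2) ^ 2 :=
    hFβ_s.unique (hg2.congr_of_eventuallyEq hev2)
  -- Clairaut for q relates the two explicit expressions
  have hmain : ((1 * Eσ (s, b) + b * (A (0,1) (1,0)) - s * (A (0,1) (0,1))) * (b ^ 2 - s ^ 2)
        - (b * Eσ (s, b) - s * Eβ (s, b)) * (2 * b)) / (b ^ 2 - s ^ 2) ^ 2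
      = ((b * (A (1,0) (0,1)) - (1 * Eσ (s, b) + s * (A (1,0) (1,0)))) * (b ^ 2 - s ^ 2)
        - (b * Eβ (s, b) - s * Eσ (s, b)) * (-(2 * s))) / (b ^ 2 - s ^ 2) ^ 2 := by
    rw [← huniq1, ← huniq2]; exact hBsym (0,1) (1,0)
  have hclairautE : A (1,0) (0,1) = A (0,1) (1,0) := hAsym (1,0) (0,1)
  -- the algebraic conclusion
  have hwave : A (1,0) (1,0) = A (0,1) (0,1) := by
    rw [div_eq_div_iff (pow_ne_zero 2 hD) (pow_ne_zero 2 hD)] at hmain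
    have hkey : s * (b ^ 2 - s ^ 2) * (A (0,1) (0,1) - A (1,0) (1,0))
        * (b ^ 2 - s ^ 2) ^ 2 = 0 := by
      linear_combination (-1 : ℝ) * hmain
        - ((b ^ 2 - s ^ 2) ^ 2 * (b ^ 2 - s ^ 2) * b) * hclairautE
    have := mul_eq_zero.1 hkey
    rcases this with h | h
    · rcases mul_eq_zero.1 h with h' | h'
      · rcases mul_eq_zero.1 h' with h'' | h''
        · exact absurd h'' hs0
        · exact absurd h'' hD
      · linarith [sub_eq_zero.1 h']
    · exact absurd h (pow_ne_zero 2 hD)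
  -- rewrite the goal as a statement about A
  have hlhs : deriv (fun s' => deriv (fun s'' => η s'' b) s') s = A (1,0) (1,0) := by
    have hev : (fun s' => deriv (fun s'' => η s'' b) s') =ᶠ[nhds s] (fun s' => Eσ (s', b)) := by
      filter_upwards [hUs.mem_nhds hsb] with s' hs'
      exact keyEσ s' b hs'
    exact (hEσ_s.congr_of_eventuallyEq hev).deriv
  have hrhs : deriv (fun b' => deriv (fun b'' => η s b'') b') b = A (0,1) (0,1) := by
    have hev : (fun b' => deriv (fun b'' => η s b'') b') =ᶠ[nhds b] (fun b' => Eβ (s, b')) := by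
      filter_upwards [hUb.mem_nhds hsb] with b' hb'
      exact keyEβ s b' hb'
    exact (hEβ_b.congr_of_eventuallyEq hev).deriv
  rw [hlhs, hrhs, hwave]
end
end

section
/- Isentropic reduction of the full Carrollian system: Let γ > 1 be a real number, let V ⊆ ℝ² be open (coordinates (t,x)), and let σ, β : V → ℝ be continuously differentiable with σ > 0 on V, satisfying pointwise on V the two isentropic Carrollian equations ∂_t(βσ) + ∂_x σ = 0 and ∂_t( σ^γ/γ + β²σ ) + ∂_x(βσ) = 0 (real powers of σ). Define ϖ = (1/2)σβ² + σ^γ/(γ(γ−1)) and e = σ^γ/γ on V. Then the third Carrollian equation holds pointwise on V: ∂_t(βϖ) + ∂_x ϖ = −∂_t(β e). -/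
noncomputable section

/-- **Isentropic reduction of the full Carrollian system** (§1): if `γ > 1` and
`(σ,β)` is a C¹ solution with `σ > 0` of the two isentropic Carrollian equations on an
open set `V`, then with `ϖ = ½σβ² + σ^γ/(γ(γ−1))` and internal energy `e = σ^γ/γ`, the
third Carrollian equation `∂_t(βϖ) + ∂_x ϖ = −∂_t(βe)` holds pointwise on `V`
(powers of `σ` are real powers). -/
theorem isentropic_reduction
    (γ : ℝ) (hγ : 1 < γ) (V : Set (ℝ × ℝ)) (hV : IsOpen V)
    (σ β : ℝ → ℝ → ℝ)
    (hσ : ContDiffOn ℝ 1 (fun p : ℝ × ℝ => σ p.1 p.2) V)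
    (hβ : ContDiffOn ℝ 1 (fun p : ℝ × ℝ => β p.1 p.2) V)
    (hpos : ∀ t x : ℝ, (t, x) ∈ V → 0 < σ t x)
    (heq1 : ∀ t x : ℝ, (t, x) ∈ V →
      deriv (fun t' => β t' x * σ t' x) t + deriv (fun x' => σ t x') x = 0)
    (heq2 : ∀ t x : ℝ, (t, x) ∈ V →
      deriv (fun t' => (σ t' x) ^ γ / γ + (β t' x)^2 * σ t' x) t
          + deriv (fun x' => β t x' * σ t x') x = 0) :
    ∀ t x : ℝ, (t, x) ∈ V →
      deriv (fun t' => β t' x *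
          ((1/2) * σ t' x * (β t' x)^2 + (σ t' x) ^ γ / (γ * (γ - 1)))) t
        + deriv (fun x' =>
            (1/2) * σ t x' * (β t x')^2 + (σ t x') ^ γ / (γ * (γ - 1))) x
      = - deriv (fun t' => β t' x * ((σ t' x) ^ γ / γ)) t := by
  intro t x hp
  have hγ0 : γ ≠ 0 := by linarith
  have hγ1 : γ - 1 ≠ 0 := by linarith
  have hS : 0 < σ t x := hpos t x hp
  have hσd : DifferentiableAt ℝ (fun p : ℝ × ℝ => σ p.1 p.2) (t, x) :=
    (hσ.contDiffAt (hV.mem_nhds hp)).differentiableAt one_ne_zero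
  have hβd : DifferentiableAt ℝ (fun p : ℝ × ℝ => β p.1 p.2) (t, x) :=
    (hβ.contDiffAt (hV.mem_nhds hp)).differentiableAt one_ne_zero
  set st := fderiv ℝ (fun p : ℝ × ℝ => σ p.1 p.2) (t, x) (1, 0) with hst_def
  set sx := fderiv ℝ (fun p : ℝ × ℝ => σ p.1 p.2) (t, x) (0, 1) with hsx_def
  set bt := fderiv ℝ (fun p : ℝ × ℝ => β p.1 p.2) (t, x) (1, 0) with hbt_def
  set bx := fderiv ℝ (fun p : ℝ × ℝ => β p.1 p.2) (t, x) (0, 1) with hbx_def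
  have hlt : HasDerivAt (fun t' : ℝ => ((t', x) : ℝ × ℝ)) ((1 : ℝ), (0 : ℝ)) t :=
    (hasDerivAt_id t).prodMk (hasDerivAt_const t x)
  have hlx : HasDerivAt (fun x' : ℝ => ((t, x') : ℝ × ℝ)) ((0 : ℝ), (1 : ℝ)) x :=
    (hasDerivAt_const x t).prodMk (hasDerivAt_id x)
  have hst : HasDerivAt (fun t' => σ t' x) st t :=
    hσd.hasFDerivAt.comp_hasDerivAt (l := fun p : ℝ × ℝ => σ p.1 p.2) t hlt
  have hsx : HasDerivAt (fun x' => σ t x') sx x :=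
    hσd.hasFDerivAt.comp_hasDerivAt (l := fun p : ℝ × ℝ => σ p.1 p.2) x hlx
  have hbt : HasDerivAt (fun t' => β t' x) bt t :=
    hβd.hasFDerivAt.comp_hasDerivAt (l := fun p : ℝ × ℝ => β p.1 p.2) t hlt
  have hbx : HasDerivAt (fun x' => β t x') bx x :=
    hβd.hasFDerivAt.comp_hasDerivAt (l := fun p : ℝ × ℝ => β p.1 p.2) x hlx
  have hpt : HasDerivAt (fun t' => (σ t' x) ^ γ) (st * γ * σ t x ^ (γ - 1)) t :=
    hst.rpow_const (Or.inl hS.ne')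
  have hpx : HasDerivAt (fun x' => (σ t x') ^ γ) (sx * γ * σ t x ^ (γ - 1)) x :=
    hsx.rpow_const (Or.inl hS.ne')
  -- rewrite the two hypotheses
  have h1 := heq1 t x hp
  rw [(hbt.fun_mul hst).deriv, hsx.deriv] at h1
  have h2 := heq2 t x hp
  rw [((hpt.div_const γ).fun_add ((hbt.fun_pow 2).fun_mul hst)).deriv, (hbx.fun_mul hsx).deriv] at h2
  -- rewrite the goal
  have hAt : HasDerivAt (fun t' => (1/2) * σ t' x * (β t' x)^2 + (σ t' x) ^ γ / (γ * (γ - 1)))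
      (((0 * σ t x + (1/2) * st) * (β t x)^2 + ((1/2) * σ t x) * ((2 : ℕ) * β t x ^ (2-1) * bt))
        + (st * γ * σ t x ^ (γ - 1)) / (γ * (γ - 1))) t :=
    (((hasDerivAt_const t (1/2 : ℝ)).fun_mul hst).fun_mul (hbt.fun_pow 2)).fun_add (hpt.div_const _)
  have hAx : HasDerivAt (fun x' => (1/2) * σ t x' * (β t x')^2 + (σ t x') ^ γ / (γ * (γ - 1)))
      (((0 * σ t x + (1/2) * sx) * (β t x)^2 + ((1/2) * σ t x) * ((2 : ℕ) * β t x ^ (2-1) * bx))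
        + (sx * γ * σ t x ^ (γ - 1)) / (γ * (γ - 1))) x :=
    (((hasDerivAt_const x (1/2 : ℝ)).fun_mul hsx).fun_mul (hbx.fun_pow 2)).fun_add (hpx.div_const _)
  rw [(hbt.fun_mul hAt).deriv, hAx.deriv, (hbt.fun_mul (hpt.div_const γ)).deriv]
  have hpow : σ t x ^ γ = σ t x ^ (γ - 1) * σ t x := by
    rw [← Real.rpow_add_one hS.ne' (γ - 1)]; norm_num
  rw [hpow]
  set S := σ t x
  set B := β t x
  set P := S ^ (γ - 1)
  field_simp at h2 ⊢
  linear_combination (γ * (2*P - (γ-1)*B^2)) * h1 + (2*γ*(γ-1)*B) * h2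
end
end
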